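/- Let ω be a primitive n-th root of unity in a field F of characteristic 0. For every sequence (aₖ)_{k ≥ 2, k ≢ 1 mod n} of elements of F, there exists a sequence (a_{nj+1})_{j≥1} of elements of F such that the formal power series f(z) = ωz + Σ_{k≥2} aₖzᵏ has compositional order exactly n. -/

import Mathlib

open PowerSeries

/-- Composition (substitution) of formal power series: coefficient formula,
valid for `g` with zero constant term. -/
noncomputable def PS.comp {F : Type*} [CommRing F] (f g : PowerSeries F) : PowerSeries F :=
  PowerSeries.mk fun k =>
    ∑ n ∈ Finset.range (k + 1), (PowerSeries.coeff n f) * (PowerSeries.coeff k (g ^ n))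

/-- The group `G` of series with zero constant term and nonzero linear coefficient. -/
def PS.G (F : Type*) [CommRing F] : Set (PowerSeries F) :=
  {f | PowerSeries.constantCoeff f = 0 ∧ PowerSeries.coeff 1 f ≠ 0}

/-- `n`-fold compositional iterate of `f`. -/
noncomputable def PS.iter {F : Type*} [CommRing F] (f : PowerSeries F) : ℕ → PowerSeries F
  | 0 => PowerSeries.X
  | n + 1 => PS.comp f (PS.iter f n)

/-- `f` has compositional order exactly `n`. -/
def PS.HasOrder {F : Type*} [CommRing F] (f : PowerSeries F) (n : ℕ) : Prop :=
  PS.iter f n = PowerSeries.X ∧ ∀ m, 0 < m → m < n → PS.iter f m ≠ PowerSeries.X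

open Finset

namespace PSAux

variable {F : Type*} [CommRing F]

lemma coeff_comp (f g : PowerSeries F) (k : ℕ) :
    coeff k (PS.comp f g) = ∑ n ∈ range (k + 1), coeff n f * coeff k (g ^ n) := by
  simp [PS.comp, coeff_mk]

lemma coeff_pow_eq_zero {g : PowerSeries F} (hg : constantCoeff g = 0) :
    ∀ {m k : ℕ}, k < m → coeff k (g ^ m) = 0 := by
  intro m
  induction m with
  | zero => intro k h; omega
  | succ m ih =>
    intro k hk
    rw [pow_succ', PowerSeries.coeff_mul]
    apply Finset.sum_eq_zero
    intro p hp
    rw [Finset.HasAntidiagonal.mem_antidiagonal] at hp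
    rcases Nat.eq_zero_or_pos p.1 with h0 | h0
    · rw [h0, coeff_zero_eq_constantCoeff, hg, zero_mul]
    · rw [ih (by omega), mul_zero]

lemma coeff_mul_congr {g g' h h' : PowerSeries F} {k : ℕ}
    (hg : ∀ j ≤ k, coeff j g = coeff j g')
    (hh : ∀ j ≤ k, coeff j h = coeff j h') :
    ∀ j ≤ k, coeff j (g * h) = coeff j (g' * h') := by
  intro j hj
  rw [PowerSeries.coeff_mul, PowerSeries.coeff_mul]
  refine Finset.sum_congr rfl fun p hp => ?_
  rw [Finset.HasAntidiagonal.mem_antidiagonal] at hp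
  rw [hg p.1 (by omega), hh p.2 (by omega)]

lemma coeff_pow_congr {g g' : PowerSeries F} {k : ℕ}
    (hgg : ∀ j ≤ k, coeff j g = coeff j g') (m : ℕ) :
    ∀ j ≤ k, coeff j (g ^ m) = coeff j (g' ^ m) := by
  induction m with
  | zero => intro j hj; rfl
  | succ m ih =>
    intro j hj
    rw [pow_succ, pow_succ]
    exact coeff_mul_congr ih hgg j hj

lemma coeff_pow_congr_of_lt {g g' : PowerSeries F} {k m : ℕ}
    (hg : constantCoeff g = 0) (hg' : constantCoeff g' = 0)
    (hlt : ∀ j < k, coeff j g = coeff j g') (hm : 2 ≤ m) :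
    coeff k (g ^ m) = coeff k (g' ^ m) := by
  obtain ⟨l, rfl⟩ : ∃ l, m = (l + 1) + 1 := ⟨m - 2, by omega⟩
  rw [pow_succ' g (l + 1), pow_succ' g' (l + 1), PowerSeries.coeff_mul, PowerSeries.coeff_mul]
  refine Finset.sum_congr rfl fun p hp => ?_
  rw [Finset.HasAntidiagonal.mem_antidiagonal] at hp
  rcases Nat.eq_zero_or_pos p.1 with h0 | h0
  · simp [h0, coeff_zero_eq_constantCoeff, hg, hg']
  rcases Nat.eq_zero_or_pos p.2 with h2 | h2
  · simp [h2, coeff_zero_eq_constantCoeff, map_pow, hg, hg']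
  · rw [hlt p.1 (by omega),
      coeff_pow_congr (fun j hj => hlt j (by omega)) (l + 1) p.2 le_rfl]

lemma coeff_pow_self {g : PowerSeries F} (hg : constantCoeff g = 0) :
    ∀ k, coeff k (g ^ k) = (coeff 1 g) ^ k := by
  intro k
  induction k with
  | zero => simp
  | succ k ih =>
    rw [pow_succ', PowerSeries.coeff_mul]
    rw [Finset.sum_eq_single (1, k)]
    · rw [ih, pow_succ']
    · rintro ⟨p1, p2⟩ hp hne
      rw [Finset.HasAntidiagonal.mem_antidiagonal] at hp
      simp only at hp ⊢
      rcases Nat.eq_zero_or_pos p1 with h0 | h0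
      · rw [h0, coeff_zero_eq_constantCoeff, hg, zero_mul]
      · have h1 : p1 ≠ 1 := by
          intro h1
          exact hne (by simp [Prod.ext_iff, h1]; omega)
        have h2 : p2 < k := by omega
        rw [coeff_pow_eq_zero hg h2, mul_zero]
    · intro h
      exact absurd (Finset.HasAntidiagonal.mem_antidiagonal.2 (by omega)) h

lemma constantCoeff_comp (f g : PowerSeries F) :
    constantCoeff (PS.comp f g) = constantCoeff f := by
  rw [← coeff_zero_eq_constantCoeff, coeff_comp]
  simp

lemma coeff_one_comp (f g : PowerSeries F) :
    coeff 1 (PS.comp f g) = coeff 1 f * coeff 1 g := by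
  rw [coeff_comp]
  simp [Finset.sum_range_succ, PowerSeries.coeff_one]

lemma comp_X (f : PowerSeries F) : PS.comp f PowerSeries.X = f := by
  ext k
  rw [coeff_comp]
  rw [Finset.sum_congr rfl (fun n _ => by
    rw [PowerSeries.coeff_X_pow, mul_ite, mul_one, mul_zero])]
  rw [Finset.sum_ite_eq (range (k + 1)) k (fun n => coeff n f)]
  simp

lemma X_comp {g : PowerSeries F} (hg : constantCoeff g = 0) :
    PS.comp PowerSeries.X g = g := by
  ext k
  rw [coeff_comp]
  rw [Finset.sum_congr rfl (fun n _ => by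
    rw [PowerSeries.coeff_X, ite_mul, one_mul, zero_mul])]
  rw [Finset.sum_ite_eq' (range (k + 1)) 1 (fun n => coeff k (g ^ n))]
  rcases Nat.eq_zero_or_pos k with rfl | hk
  · simp [coeff_zero_eq_constantCoeff, hg]
  · rw [if_pos (Finset.mem_range.2 (by omega)), pow_one]

lemma one_comp (g : PowerSeries F) : PS.comp 1 g = 1 := by
  ext k
  rw [coeff_comp]
  rw [Finset.sum_congr rfl (fun n _ => by
    rw [PowerSeries.coeff_one, ite_mul, one_mul, zero_mul])]
  rw [Finset.sum_ite_eq' (range (k + 1)) 0 (fun n => coeff k (g ^ n))]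
  rw [if_pos (Finset.mem_range.2 (by omega)), pow_zero]

lemma mul_comp {h : PowerSeries F} (hh : constantCoeff h = 0) (f g : PowerSeries F) :
    PS.comp (f * g) h = PS.comp f h * PS.comp g h := by
  ext k
  rw [coeff_comp, PowerSeries.coeff_mul]
  set t : ℕ → ℕ → F := fun i j => coeff i f * coeff j g * coeff k (h ^ (i + j)) with ht
  have hvanish : ∀ i j, k < i + j → t i j = 0 := fun i j hij => by
    simp only [ht]; rw [coeff_pow_eq_zero hh hij, mul_zero]
  have hR : ∑ p ∈ antidiagonal k, coeff p.1 (PS.comp f h) * coeff p.2 (PS.comp g h)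
      = ∑ i ∈ range (k + 1), ∑ j ∈ range (k + 1), t i j := by
    have step1 : ∀ p ∈ antidiagonal k,
        coeff p.1 (PS.comp f h) * coeff p.2 (PS.comp g h)
        = ∑ i ∈ range (k + 1), ∑ j ∈ range (k + 1),
            (coeff i f * coeff p.1 (h ^ i)) * (coeff j g * coeff p.2 (h ^ j)) := by
      intro p hp
      rw [Finset.HasAntidiagonal.mem_antidiagonal] at hp
      rw [coeff_comp, coeff_comp]
      rw [Finset.sum_subset (Finset.range_subset_range.2 (by omega : p.1 + 1 ≤ k + 1))
        (fun i _ hi => by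
          rw [coeff_pow_eq_zero hh (by simp only [Finset.mem_range] at hi ⊢; omega), mul_zero])]
      rw [Finset.sum_subset (Finset.range_subset_range.2 (by omega : p.2 + 1 ≤ k + 1))
        (fun j _ hj => by
          rw [coeff_pow_eq_zero hh (by simp only [Finset.mem_range] at hj ⊢; omega), mul_zero])]
      rw [Finset.sum_mul_sum]
    rw [Finset.sum_congr rfl step1, Finset.sum_comm]
    refine Finset.sum_congr rfl fun i _ => ?_
    rw [Finset.sum_comm]
    refine Finset.sum_congr rfl fun j _ => ?_
    have hmm : ∑ p ∈ antidiagonal k, (coeff i f * coeff p.1 (h ^ i)) *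
        (coeff j g * coeff p.2 (h ^ j))
        = coeff i f * coeff j g *
          ∑ p ∈ antidiagonal k, coeff p.1 (h ^ i) * coeff p.2 (h ^ j) := by
      rw [Finset.mul_sum]
      exact Finset.sum_congr rfl fun p _ => by ring
    rw [hmm, ← PowerSeries.coeff_mul, ← pow_add]
  rw [hR]
  have step2 : ∀ n ∈ range (k + 1),
      coeff n (f * g) * coeff k (h ^ n)
      = ∑ p ∈ range (k + 1) ×ˢ range (k + 1), if p.1 + p.2 = n then t p.1 p.2 else 0 := by
    intro n hn
    rw [Finset.mem_range] at hn
    rw [PowerSeries.coeff_mul, Finset.sum_mul]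
    rw [Finset.sum_ite, Finset.sum_const_zero, add_zero]
    have hset : (range (k + 1) ×ˢ range (k + 1)).filter (fun p => p.1 + p.2 = n)
        = antidiagonal n := by
      ext ⟨i, j⟩
      simp only [Finset.mem_filter, Finset.mem_product, Finset.mem_range,
        Finset.HasAntidiagonal.mem_antidiagonal]
      omega
    rw [hset]
    refine Finset.sum_congr rfl fun p hp => ?_
    rw [Finset.HasAntidiagonal.mem_antidiagonal] at hp
    simp only [ht]
    rw [hp]
  calc ∑ n ∈ range (k + 1), coeff n (f * g) * coeff k (h ^ n)
      = ∑ n ∈ range (k + 1), ∑ p ∈ range (k + 1) ×ˢ range (k + 1),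
          if p.1 + p.2 = n then t p.1 p.2 else 0 := Finset.sum_congr rfl step2
    _ = ∑ p ∈ range (k + 1) ×ˢ range (k + 1), ∑ n ∈ range (k + 1),
          if p.1 + p.2 = n then t p.1 p.2 else 0 := Finset.sum_comm
    _ = ∑ p ∈ range (k + 1) ×ˢ range (k + 1), t p.1 p.2 := by
        refine Finset.sum_congr rfl fun p _ => ?_
        rw [Finset.sum_ite_eq (range (k + 1)) (p.1 + p.2) (fun _ => t p.1 p.2)]
        split_ifs with hmem
        · rfl
        · rw [Finset.mem_range] at hmem
          exact (hvanish p.1 p.2 (by omega)).symm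
    _ = ∑ i ∈ range (k + 1), ∑ j ∈ range (k + 1), t i j := Finset.sum_product _ _ _

lemma pow_comp {h : PowerSeries F} (hh : constantCoeff h = 0) (g : PowerSeries F)
    (m : ℕ) : PS.comp (g ^ m) h = (PS.comp g h) ^ m := by
  induction m with
  | zero => rw [pow_zero, pow_zero, one_comp]
  | succ m ih => rw [pow_succ, pow_succ, mul_comp hh, ih]

lemma comp_assoc {g h : PowerSeries F} (hg : constantCoeff g = 0)
    (hh : constantCoeff h = 0) (f : PowerSeries F) :
    PS.comp (PS.comp f g) h = PS.comp f (PS.comp g h) := by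
  ext k
  rw [coeff_comp, coeff_comp]
  have hrhs : ∀ n ∈ range (k + 1),
      coeff n f * coeff k ((PS.comp g h) ^ n)
      = ∑ m ∈ range (k + 1), coeff n f * (coeff m (g ^ n) * coeff k (h ^ m)) := by
    intro n _
    rw [← pow_comp hh, coeff_comp, Finset.mul_sum]
  rw [Finset.sum_congr rfl hrhs]
  have hlhs : ∀ m ∈ range (k + 1),
      coeff m (PS.comp f g) * coeff k (h ^ m)
      = ∑ n ∈ range (k + 1), coeff n f * coeff m (g ^ n) * coeff k (h ^ m) := by
    intro m hm
    rw [Finset.mem_range] at hm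
    rw [coeff_comp, Finset.sum_mul]
    rw [Finset.sum_subset (Finset.range_subset_range.2 (by omega : m + 1 ≤ k + 1))
      (fun n _ hn => by
        rw [coeff_pow_eq_zero hg (by simp only [Finset.mem_range] at hn ⊢; omega),
          mul_zero, zero_mul])]
  rw [Finset.sum_congr rfl hlhs, Finset.sum_comm]
  exact Finset.sum_congr rfl fun n _ => Finset.sum_congr rfl fun m _ => by ring

lemma constantCoeff_iter {f : PowerSeries F} (hf : constantCoeff f = 0) (m : ℕ) :
    constantCoeff (PS.iter f m) = 0 := by
  cases m with
  | zero => simp [PS.iter]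
  | succ m => rw [PS.iter, constantCoeff_comp, hf]

lemma coeff_one_iter {f : PowerSeries F} (m : ℕ) :
    coeff 1 (PS.iter f m) = (coeff 1 f) ^ m := by
  induction m with
  | zero => simp [PS.iter]
  | succ m ih => rw [PS.iter, coeff_one_comp, ih, pow_succ']

lemma iter_succ' {f : PowerSeries F} (hf : constantCoeff f = 0) (m : ℕ) :
    PS.iter f (m + 1) = PS.comp (PS.iter f m) f := by
  induction m with
  | zero =>
    show PS.comp f (PS.iter f 0) = PS.comp (PS.iter f 0) f
    show PS.comp f PowerSeries.X = PS.comp PowerSeries.X f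
    rw [comp_X, X_comp hf]
  | succ m ih =>
    show PS.comp f (PS.iter f (m + 1)) = PS.comp (PS.iter f (m + 1)) f
    rw [ih, ← comp_assoc (constantCoeff_iter hf m) hf f]
    rw [show PS.comp f (PS.iter f m) = PS.iter f (m + 1) from rfl, ih]

lemma coeff_iter_congr {f f' : PowerSeries F} {k : ℕ}
    (h : ∀ j ≤ k, coeff j f = coeff j f') (m : ℕ) :
    ∀ j ≤ k, coeff j (PS.iter f m) = coeff j (PS.iter f' m) := by
  induction m with
  | zero => intro j _; rfl
  | succ m ih =>
    intro j hj
    show coeff j (PS.comp f (PS.iter f m)) = coeff j (PS.comp f' (PS.iter f' m))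
    rw [coeff_comp, coeff_comp]
    refine Finset.sum_congr rfl fun i hi => ?_
    rw [Finset.mem_range] at hi
    rw [h i (by omega),
      coeff_pow_congr (fun l hl => ih l (by omega)) i j le_rfl]

lemma coeff_C_mul_X_pow' (c : F) (k j : ℕ) :
    coeff j (PowerSeries.C c * PowerSeries.X ^ k) = if j = k then c else 0 := by
  rw [← PowerSeries.smul_eq_C_mul, map_smul, PowerSeries.coeff_X_pow, smul_eq_mul,
    mul_ite, mul_one, mul_zero]

lemma key_diff {f : PowerSeries F} (hf : constantCoeff f = 0) {k : ℕ} (hk : 2 ≤ k)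
    (c : F) (m : ℕ) :
    coeff k (PS.iter (f + PowerSeries.C c * PowerSeries.X ^ k) m)
      = coeff k (PS.iter f m)
        + c * ∑ i ∈ range m, (coeff 1 f) ^ (m - 1 - i) * (coeff 1 f) ^ (k * i) := by
  set f' := f + PowerSeries.C c * PowerSeries.X ^ k with hf'
  have hfj : ∀ j, j ≠ k → coeff j f' = coeff j f := by
    intro j hj
    rw [hf', map_add, coeff_C_mul_X_pow, if_neg hj, add_zero]
  have hfk : coeff k f' = coeff k f + c := by
    rw [hf', map_add, coeff_C_mul_X_pow, if_pos rfl]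
  have hf'0 : constantCoeff f' = 0 := by
    rw [← coeff_zero_eq_constantCoeff] at hf ⊢
    rw [hfj 0 (by omega), hf]
  have hω : coeff 1 f' = coeff 1 f := hfj 1 (by omega)
  have hbelow : ∀ m j, j < k → coeff j (PS.iter f' m) = coeff j (PS.iter f m) :=
    fun m j hj =>
      coeff_iter_congr (f := f') (f' := f) (k := k - 1)
        (fun i hi => hfj i (by omega)) m j (by omega)
  induction m with
  | zero => simp [PS.iter]
  | succ m ih =>
    set ω₀ := coeff 1 f with hω₀
    set T := ∑ i ∈ range m, ω₀ ^ (m - 1 - i) * ω₀ ^ (k * i) with hTdef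
    set g := PS.iter f m with hg
    set g' := PS.iter f' m with hg'
    have hgc : constantCoeff g = 0 := constantCoeff_iter hf m
    have hg'c : constantCoeff g' = 0 := constantCoeff_iter hf'0 m
    have h1g : coeff 1 g = ω₀ ^ m := coeff_one_iter m
    have h1g' : coeff 1 g' = ω₀ ^ m := by rw [hg', coeff_one_iter, hω]
    have hterm : ∀ j ∈ range (k + 1),
        coeff j f' * coeff k (g' ^ j)
        = coeff j f * coeff k (g ^ j)
          + ((if j = 1 then ω₀ * (c * T) else 0)
            + (if j = k then c * (ω₀ ^ m) ^ k else 0)) := by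
      intro j hj
      rw [Finset.mem_range] at hj
      by_cases hj1 : j = 1
      · subst hj1
        rw [if_pos rfl, if_neg (by omega), pow_one, pow_one, hω, ih]
        ring
      by_cases hjk : j = k
      · subst hjk
        rw [if_neg hj1, if_pos rfl, hfk, coeff_pow_self hg'c, coeff_pow_self hgc,
          h1g, h1g']
        ring
      by_cases hj0 : j = 0
      · subst hj0
        rw [if_neg hj1, if_neg hjk, pow_zero, pow_zero, hfj 0 hjk]
        ring
      · have h2 : 2 ≤ j := by omega
        rw [hfj j hjk, coeff_pow_congr_of_lt hg'c hgc (hbelow m) h2,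
          if_neg hj1, if_neg hjk]
        ring
    have hT : ∑ i ∈ range (m + 1), ω₀ ^ (m + 1 - 1 - i) * ω₀ ^ (k * i)
        = ω₀ ^ (k * m) + ω₀ * T := by
      have h1 : ∀ i ∈ range m,
          ω₀ ^ (m + 1 - 1 - i) * ω₀ ^ (k * i)
          = ω₀ * (ω₀ ^ (m - 1 - i) * ω₀ ^ (k * i)) := by
        intro i hi
        rw [Finset.mem_range] at hi
        rw [show m + 1 - 1 - i = (m - 1 - i) + 1 by omega, pow_succ']
        ring
      rw [Finset.sum_range_succ, Finset.sum_congr rfl h1, ← Finset.mul_sum,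
        show m + 1 - 1 - m = 0 by omega, pow_zero, one_mul, ← hTdef, add_comm]
    rw [show PS.iter f' (m + 1) = PS.comp f' (PS.iter f' m) from rfl,
      show PS.iter f (m + 1) = PS.comp f (PS.iter f m) from rfl,
      coeff_comp, coeff_comp, ← hg, ← hg']
    rw [Finset.sum_congr rfl hterm, Finset.sum_add_distrib, Finset.sum_add_distrib,
      Finset.sum_ite_eq' (range (k + 1)) 1 (fun _ => ω₀ * (c * T)),
      Finset.sum_ite_eq' (range (k + 1)) k (fun _ => c * (ω₀ ^ m) ^ k),
      if_pos (Finset.mem_range.2 (by omega)), if_pos (Finset.mem_range.2 (by omega)),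
      hT]
    ring

end PSAux

noncomputable def PSsol (F : Type*) [Field F] (n : ℕ) (ω : F) (a : ℕ → F) (k : ℕ) : F :=
  if k = 0 then 0
  else if k = 1 then ω
  else if k % n ≠ 1 % n then a k
  else - (PowerSeries.coeff k (PS.iter (PowerSeries.mk fun j =>
      if _ : j < k then PSsol F n ω a j else 0) n)) / ((n : F) * ω ^ (n - 1))
termination_by k

namespace PSAux2

variable {F : Type*} [Field F] (n : ℕ) (ω : F) (a : ℕ → F)

lemma PSsol_zero : PSsol F n ω a 0 = 0 := by rw [PSsol]; simp

lemma PSsol_one : PSsol F n ω a 1 = ω := by rw [PSsol]; simp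

lemma PSsol_ne {k : ℕ} (h2 : 2 ≤ k) (h : k % n ≠ 1 % n) : PSsol F n ω a k = a k := by
  rw [PSsol, if_neg (by omega), if_neg (by omega), if_pos h]

lemma PSsol_eq {k : ℕ} (h2 : 2 ≤ k) (h : k % n = 1 % n) :
    PSsol F n ω a k
      = - (PowerSeries.coeff k (PS.iter (PowerSeries.mk fun j =>
          if _ : j < k then PSsol F n ω a j else 0) n)) / ((n : F) * ω ^ (n - 1)) := by
  rw [PSsol, if_neg (by omega), if_neg (by omega), if_neg (by simp [h])]

end PSAux2

open PSAux PSAux2 Finset PowerSeries in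
theorem stmt_11 (F : Type*) [Field F] [CharZero F] (n : ℕ) (hn : 0 < n) (ω : F)
    (hω : IsPrimitiveRoot ω n) (a : ℕ → F) :
    ∃ f : PowerSeries F,
      PowerSeries.constantCoeff f = 0 ∧
      PowerSeries.coeff 1 f = ω ∧
      (∀ k, 2 ≤ k → k % n ≠ 1 % n → PowerSeries.coeff k f = a k) ∧
      PS.HasOrder f n := by
  classical
  set f : PowerSeries F := PowerSeries.mk (PSsol F n ω a) with hfdef
  have hωn : ω ^ n = 1 := hω.pow_eq_one
  have hωne : ω ≠ 0 := by
    intro h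
    rw [h, zero_pow (by omega)] at hωn
    exact one_ne_zero hωn.symm
  have hf0 : constantCoeff f = 0 := by
    rw [← coeff_zero_eq_constantCoeff, hfdef, coeff_mk, PSsol_zero]
  have hω1 : coeff 1 f = ω := by rw [hfdef, coeff_mk, PSsol_one]
  have hiter1 : coeff 1 (PS.iter f n) = 1 := by rw [coeff_one_iter, hω1, hωn]
  have hSne : ((n : F) * ω ^ (n - 1)) ≠ 0 :=
    mul_ne_zero (Nat.cast_ne_zero.2 (by omega)) (pow_ne_zero _ hωne)
  -- the stage lemma: coefficients at k ≡ 1 mod n vanish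
  have hstage : ∀ k, 2 ≤ k → k % n = 1 % n → coeff k (PS.iter f n) = 0 := by
    intro k hk2 hkmod
    set fk : PowerSeries F :=
      PowerSeries.mk (fun j => if _ : j < k then PSsol F n ω a j else 0) with hfk
    set cc : F := PSsol F n ω a k with hcc
    have hfk0 : constantCoeff fk = 0 := by
      rw [← coeff_zero_eq_constantCoeff, hfk, coeff_mk, dif_pos (by omega : 0 < k),
        PSsol_zero]
    have hfk1 : coeff 1 fk = ω := by
      rw [hfk, coeff_mk, dif_pos (by omega : 1 < k), PSsol_one]
    have hagree : ∀ j ≤ k,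
        coeff j f = coeff j (fk + PowerSeries.C cc * PowerSeries.X ^ k) := by
      intro j hj
      rw [hfdef, coeff_mk, map_add, hfk, coeff_mk, coeff_C_mul_X_pow']
      rcases eq_or_lt_of_le hj with rfl | hlt
      · rw [dif_neg (lt_irrefl j), if_pos rfl, zero_add, hcc]
      · rw [dif_pos hlt, if_neg (by omega), add_zero]
    have hdvd : n ∣ k - 1 := (Nat.modEq_iff_dvd' (by omega : 1 ≤ k)).1 hkmod.symm
    have hωk : ω ^ k = ω := by
      obtain ⟨t, ht⟩ := hdvd
      have h1 : ω ^ (k - 1) = 1 := by rw [ht, pow_mul, hωn, one_pow]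
      calc ω ^ k = ω ^ (k - 1 + 1) := by rw [Nat.sub_add_cancel (by omega)]
        _ = ω ^ (k - 1) * ω := pow_succ _ _
        _ = ω := by rw [h1, one_mul]
    have hT : ∑ i ∈ range n, (coeff 1 fk) ^ (n - 1 - i) * (coeff 1 fk) ^ (k * i)
        = (n : F) * ω ^ (n - 1) := by
      rw [hfk1]
      have hterm : ∀ i ∈ range n, ω ^ (n - 1 - i) * ω ^ (k * i) = ω ^ (n - 1) := by
        intro i hi
        rw [Finset.mem_range] at hi
        rw [pow_mul, hωk, ← pow_add,
          show n - 1 - i + i = n - 1 by omega]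
      rw [Finset.sum_congr rfl hterm, Finset.sum_const, Finset.card_range,
        nsmul_eq_mul]
    have hkey := key_diff hfk0 hk2 cc n
    rw [hT] at hkey
    have hcval : cc = - coeff k (PS.iter fk n) / ((n : F) * ω ^ (n - 1)) := by
      rw [hcc, PSsol_eq n ω a hk2 hkmod, hfk]
    have hzero : coeff k (PS.iter (fk + PowerSeries.C cc * PowerSeries.X ^ k) n)
        = 0 := by
      have hn0 : (n : F) ≠ 0 := Nat.cast_ne_zero.2 (by omega)
      rw [hkey, hcval]
      field_simp
      ring
    rw [coeff_iter_congr hagree n k le_rfl, hzero]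
  -- all coefficients of the n-th iterate agree with X
  have hbody : ∀ j, (∀ i, i < j → coeff i (PS.iter f n) = coeff i PowerSeries.X) →
      coeff j (PS.iter f n) = coeff j PowerSeries.X := by
    intro k IH
    by_cases hk0 : k = 0
    · subst hk0
      rw [coeff_zero_eq_constantCoeff, constantCoeff_iter hf0,
        PowerSeries.constantCoeff_X]
    by_cases hk1 : k = 1
    · subst hk1
      rw [hiter1, PowerSeries.coeff_X, if_pos rfl]
    have hk2 : 2 ≤ k := by omega
    by_cases hmod : k % n = 1 % n
    · rw [hstage k hk2 hmod, PowerSeries.coeff_X, if_neg hk1]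
    -- commutation argument
    set g := PS.iter f n with hgdef
    have hg0 : constantCoeff g = 0 := constantCoeff_iter hf0 n
    have hXc : constantCoeff (PowerSeries.X : PowerSeries F) = 0 :=
      PowerSeries.constantCoeff_X
    have hcoeff0g : coeff 0 g = 0 := by rw [coeff_zero_eq_constantCoeff]; exact hg0
    have hcoeff0f : coeff 0 f = 0 := by rw [coeff_zero_eq_constantCoeff]; exact hf0
    have hcomm : PS.comp g f = PS.comp f g := by
      rw [hgdef, ← iter_succ' hf0 n]
      rfl
    have hA : coeff k (PS.comp g f) = coeff k f + coeff k g * ω ^ k := by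
      rw [coeff_comp]
      have hterm : ∀ j ∈ range (k + 1), coeff j g * coeff k (f ^ j)
          = (if j = 1 then coeff k f else 0)
            + (if j = k then coeff k g * ω ^ k else 0) := by
        intro j hj
        rw [Finset.mem_range] at hj
        by_cases hj1 : j = 1
        · subst hj1
          rw [if_pos rfl, if_neg (by omega), hiter1, pow_one, one_mul, add_zero]
        by_cases hjk : j = k
        · subst hjk
          rw [if_neg hj1, if_pos rfl, coeff_pow_self hf0, hω1, zero_add]
        by_cases hj0 : j = 0
        · subst hj0
          rw [hcoeff0g, zero_mul, if_neg hj1, if_neg hjk, add_zero]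
        · rw [IH j (by omega), PowerSeries.coeff_X, if_neg hj1, zero_mul,
            if_neg hj1, if_neg hjk, add_zero]
      rw [Finset.sum_congr rfl hterm, Finset.sum_add_distrib,
        Finset.sum_ite_eq' (range (k + 1)) 1 (fun _ => coeff k f),
        Finset.sum_ite_eq' (range (k + 1)) k (fun _ => coeff k g * ω ^ k),
        if_pos (Finset.mem_range.2 (by omega)), if_pos (Finset.mem_range.2 (by omega))]
    have hB : coeff k (PS.comp f g) = ω * coeff k g + coeff k f := by
      rw [coeff_comp]
      have hterm : ∀ j ∈ range (k + 1), coeff j f * coeff k (g ^ j)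
          = (if j = 1 then ω * coeff k g else 0)
            + (if j = k then coeff k f else 0) := by
        intro j hj
        rw [Finset.mem_range] at hj
        by_cases hj1 : j = 1
        · subst hj1
          rw [if_pos rfl, if_neg (by omega), hω1, pow_one, add_zero]
        by_cases hjk : j = k
        · subst hjk
          rw [if_neg hj1, if_pos rfl,
            coeff_pow_congr_of_lt hg0 hXc (fun i hi => IH i hi) hk2,
            PowerSeries.coeff_X_pow, if_pos rfl, mul_one, zero_add]
        by_cases hj0 : j = 0
        · subst hj0
          rw [hcoeff0f, zero_mul, if_neg hj1, if_neg hjk, add_zero]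
        · have h2j : 2 ≤ j := by omega
          rw [coeff_pow_congr_of_lt hg0 hXc (fun i hi => IH i hi) h2j,
            PowerSeries.coeff_X_pow, if_neg (by omega), mul_zero,
            if_neg hj1, if_neg hjk, add_zero]
      rw [Finset.sum_congr rfl hterm, Finset.sum_add_distrib,
        Finset.sum_ite_eq' (range (k + 1)) 1 (fun _ => ω * coeff k g),
        Finset.sum_ite_eq' (range (k + 1)) k (fun _ => coeff k f),
        if_pos (Finset.mem_range.2 (by omega)), if_pos (Finset.mem_range.2 (by omega)),
        add_comm]
    have heq := congrArg (coeff k) hcomm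
    rw [hA, hB] at heq
    have hωkω : ω ^ k ≠ ω := by
      intro hcon
      have h2 : ω ^ (k - 1) = 1 := by
        apply mul_right_cancel₀ hωne
        rw [← pow_succ, Nat.sub_add_cancel (by omega), hcon, one_mul]
      have hdvd : n ∣ k - 1 := (hω.pow_eq_one_iff_dvd (k - 1)).1 h2
      exact hmod ((Nat.modEq_iff_dvd' (by omega : 1 ≤ k)).2 hdvd).symm
    have hmul : coeff k g * (ω ^ k - ω) = 0 := by linear_combination heq
    have hb : coeff k g = 0 := by
      rcases mul_eq_zero.1 hmul with h | h
      · exact h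
      · exact absurd (sub_eq_zero.1 h) hωkω
    rw [hb, PowerSeries.coeff_X, if_neg hk1]
  have hiterX : PS.iter f n = PowerSeries.X := by
    ext k
    induction k using Nat.strong_induction_on with
    | _ k IH => exact hbody k IH
  refine ⟨f, hf0, hω1, ?_, hiterX, ?_⟩
  · intro k hk2 hkmod
    rw [hfdef, coeff_mk, PSsol_ne n ω a hk2 hkmod]
  · intro m hm0 hmn hEq
    apply hω.pow_ne_one_of_pos_of_lt hm0.ne' hmn
    have := congrArg (coeff 1) hEq
    rw [coeff_one_iter, hω1, PowerSeries.coeff_X, if_pos rfl] at this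
    exact this
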